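/- Let G be a group with a faithful self-similar action on X* with |X| ≥ 2, and let S be the associated inverse hull. Then S is a Hausdorff inverse semigroup if and only if for each g ∈ G there is a finite set F_g ⊆ X* such that F_g X* is exactly the set of words strongly fixed by g. Moreover, an idempotent w w* lies below u g v* in the natural partial order if and only if u = v, w = v z, and g strongly fixes z. -/
import Mathlib


/-- A self-similar action of a group `G` on the free monoid on the alphabet `X`:
an action on letters together with restrictions `g|_x`, satisfying the self-similarity
axioms. -/
structure SelfSimilarAction (G X : Type*) [Group G] where
  act : G → X → X
  res : G → X → G
  act_one : ∀ x, act 1 x = x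
  act_mul : ∀ g h x, act (g * h) x = act g (act h x)
  res_one : ∀ x, res 1 x = 1
  res_mul : ∀ g h x, res (g * h) x = res g (act h x) * res h x

namespace SelfSimilarAction

variable {G X : Type*} [Group G] (σ : SelfSimilarAction G X)

/-- The induced action of `g ∈ G` on finite words. -/
def actW (g : G) : List X → List X
  | [] => []
  | x :: u => σ.act g x :: actW (σ.res g x) u

/-- The restriction `g|_w` of `g ∈ G` at a finite word `w`. -/
def resW (g : G) : List X → G
  | [] => g
  | x :: u => resW (σ.res g x) u

/-- A word `w` is strongly fixed by `g` if `g(w) = w` and `g|_w = 1`. -/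
def SFix (g : G) (w : List X) : Prop := σ.actW g w = w ∧ σ.resW g w = 1

/-- The self-similar action is faithful: `G` acts faithfully on `X*`. -/
def Faithful : Prop := ∀ g : G, (∀ w : List X, σ.actW g w = w) → g = 1

end SelfSimilarAction

namespace SelfSimilarAction

variable {G X : Type*} [Group G] (σ : SelfSimilarAction G X)

@[simp] lemma actW_nil' (g : G) : σ.actW g [] = [] := rfl
@[simp] lemma actW_cons' (g : G) (x : X) (u : List X) :
    σ.actW g (x :: u) = σ.act g x :: σ.actW (σ.res g x) u := rfl
@[simp] lemma resW_nil' (g : G) : σ.resW g [] = g := rfl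
@[simp] lemma resW_cons' (g : G) (x : X) (u : List X) :
    σ.resW g (x :: u) = σ.resW (σ.res g x) u := rfl

@[simp] lemma actW_length' (g : G) (u : List X) : (σ.actW g u).length = u.length := by
  induction u generalizing g with
  | nil => rfl
  | cons x u ih => simp [ih]

@[simp] lemma actW_one' (u : List X) : σ.actW 1 u = u := by
  induction u with
  | nil => rfl
  | cons x u ih => rw [actW_cons', σ.act_one, σ.res_one, ih]

@[simp] lemma resW_one' (u : List X) : σ.resW 1 u = 1 := by
  induction u with
  | nil => rfl
  | cons x u ih => rw [resW_cons', σ.res_one, ih]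

lemma actW_mul' (g h : G) (u : List X) :
    σ.actW (g * h) u = σ.actW g (σ.actW h u) := by
  induction u generalizing g h with
  | nil => rfl
  | cons x u ih => rw [actW_cons', σ.act_mul, σ.res_mul, ih]; rfl

lemma resW_mul' (g h : G) (u : List X) :
    σ.resW (g * h) u = σ.resW g (σ.actW h u) * σ.resW h u := by
  induction u generalizing g h with
  | nil => rfl
  | cons x u ih => rw [resW_cons', σ.res_mul, ih]; rfl

lemma actW_append' (g : G) (u v : List X) :
    σ.actW g (u ++ v) = σ.actW g u ++ σ.actW (σ.resW g u) v := by
  induction u generalizing g with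
  | nil => simp
  | cons x u ih => simp [ih]

lemma resW_append' (g : G) (u v : List X) :
    σ.resW g (u ++ v) = σ.resW (σ.resW g u) v := by
  induction u generalizing g with
  | nil => simp
  | cons x u ih => simp [ih]

lemma sfix_append {g : G} {w : List X} (hw : σ.SFix g w) (q : List X) :
    σ.SFix g (w ++ q) := by
  obtain ⟨h1, h2⟩ := hw
  constructor
  · rw [actW_append', h1, h2, actW_one']
  · rw [resW_append', h2, resW_one']

end SelfSimilarAction


namespace SelfSimilarAction

variable {G X : Type*} [Group G] [DecidableEq X] (σ : SelfSimilarAction G X)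

/-- The underlying set of the inverse hull `S` of `M = X* G`: zero (encoded by `none`)
together with the elements `u g v*`. -/
abbrev IH (G X : Type*) := Option (List X × G × List X)

/-- The product `(u g v*)(w h z*)` in the inverse hull, computed by the rules
`g x = g(x) g|_x`, `x* g = g|_{g⁻¹(x)} (g⁻¹(x))*` and `x* y = δ_{x,y}`. -/
def triMul (a b : List X × G × List X) : IH G X :=
  if a.2.2 <+: b.1 then
    let r := b.1.drop a.2.2.length
    some (a.1 ++ σ.actW a.2.1 r, σ.resW a.2.1 r * b.2.1, b.2.2)
  else if b.1 <+: a.2.2 then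
    let r := a.2.2.drop b.1.length
    let r' := σ.actW b.2.1⁻¹ r
    some (a.1, a.2.1 * σ.resW b.2.1 r', b.2.2 ++ r')
  else none

/-- The multiplication of the inverse hull. -/
def ihMul : IH G X → IH G X → IH G X
  | some a, some b => σ.triMul a b
  | _, _ => none

/-- The inversion `(u g v*)* = v g⁻¹ u*` of the inverse hull. -/
def ihStar : IH G X → IH G X :=
  Option.map fun a => (a.2.2, a.2.1⁻¹, a.1)

/-- The natural partial order of the inverse hull: `a ≤ b` iff `a = b a* a`. -/
def ihLe (a b : IH G X) : Prop := a = σ.ihMul (σ.ihMul b (ihStar a)) a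

/-- The inverse hull is Hausdorff: for all `s, t` the order ideal `s↓ ∩ t↓` is
finitely generated. -/
def IHHausdorff : Prop :=
  ∀ s t : IH G X, ∃ F : Finset (IH G X),
    {x : IH G X | σ.ihLe x s ∧ σ.ihLe x t} = {x : IH G X | ∃ f ∈ F, σ.ihLe x f}

lemma ihMul_none_right (a : IH G X) : σ.ihMul a none = none := by cases a <;> rfl
lemma ihMul_none_left (a : IH G X) : σ.ihMul none a = none := by cases a <;> rfl
lemma ihMul_some_some (a b : List X × G × List X) :
    σ.ihMul (some a) (some b) = σ.triMul a b := rfl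

@[simp] lemma ihStar_none' : ihStar (none : IH G X) = none := rfl
@[simp] lemma ihStar_some' (a : List X × G × List X) :
    ihStar (some a : IH G X) = some (a.2.2, a.2.1⁻¹, a.1) := rfl

lemma ihLe_none_left (x : IH G X) : σ.ihLe none x := by
  unfold ihLe
  simp [ihMul_none_right, ihMul_none_left]

lemma ihLe_none_right_iff (x : IH G X) : σ.ihLe x none ↔ x = none := by
  unfold ihLe
  simp only [ihMul_none_left]

lemma actW_inv_cancel' (g : G) (u : List X) : σ.actW g⁻¹ (σ.actW g u) = u := by
  rw [← actW_mul', inv_mul_cancel, actW_one']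

lemma le_some_iff (w : List X) (k : G) (z u : List X) (g : G) (v : List X) :
    σ.ihLe (some (w, k, z)) (some (u, g, v)) ↔
      ∃ r : List X, z = v ++ r ∧ w = u ++ σ.actW g r ∧ k = σ.resW g r := by
  unfold ihLe
  rw [ihStar_some']
  simp only [ihMul_some_some]
  by_cases h1 : v <+: z
  · obtain ⟨r, rfl⟩ := h1
    have e1 : σ.triMul (u, g, v) (v ++ r, k⁻¹, w)
        = some (u ++ σ.actW g r, σ.resW g r * k⁻¹, w) := by
      rw [triMul, if_pos (show (u, g, v).2.2 <+: (v ++ r, k⁻¹, w).1 from List.prefix_append v r)]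
      simp
    rw [e1, ihMul_some_some]
    have e2 : σ.triMul (u ++ σ.actW g r, σ.resW g r * k⁻¹, w) (w, k, v ++ r)
        = some (u ++ σ.actW g r, σ.resW g r, v ++ r) := by
      rw [triMul, if_pos (show (u ++ σ.actW g r, σ.resW g r * k⁻¹, w).2.2 <+: (w, k, v ++ r).1
        from List.prefix_refl w)]
      simp [List.drop_length, inv_mul_cancel_right]
    rw [e2]
    simp only [Option.some.injEq, Prod.mk.injEq]
    constructor
    · rintro ⟨hw, hk, -⟩
      exact ⟨r, rfl, hw, hk⟩
    · rintro ⟨r0, hz, hw, hk⟩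
      have : r0 = r := List.append_cancel_left hz.symm
      subst this
      exact ⟨hw, hk, trivial⟩
  · by_cases h2 : z <+: v
    · obtain ⟨r, rfl⟩ := h2
      have hr : r ≠ [] := by rintro rfl; exact h1 (by simp)
      have hact : σ.actW k r ≠ [] := by
        intro h
        apply hr
        have := σ.actW_length' k r
        rw [h] at this
        exact List.eq_nil_of_length_eq_zero this.symm
      have e1 : σ.triMul (u, g, z ++ r) (z, k⁻¹, w)
          = some (u, g * σ.resW k⁻¹ (σ.actW k r), w ++ σ.actW k r) := by
        rw [triMul,
          if_neg (show ¬ (u, g, z ++ r).2.2 <+: (z, k⁻¹, w).1 from h1),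
          if_pos (show (z, k⁻¹, w).1 <+: (u, g, z ++ r).2.2 from List.prefix_append z r)]
        simp
      rw [e1, ihMul_some_some]
      have hnp : ¬ (w ++ σ.actW k r <+: w) := by
        intro h
        have h3 := h.length_le
        rw [List.length_append, actW_length'] at h3
        have : r.length = 0 := by omega
        exact hr (List.eq_nil_of_length_eq_zero this)
      have e2 : σ.triMul (u, g * σ.resW k⁻¹ (σ.actW k r), w ++ σ.actW k r) (w, k, z)
          = some (u, (g * σ.resW k⁻¹ (σ.actW k r)) * σ.resW k r, z ++ r) := by
        rw [triMul, if_neg (show ¬ (u, g * σ.resW k⁻¹ (σ.actW k r), w ++ σ.actW k r).2.2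
            <+: (w, k, z).1 from hnp),
          if_pos (show (w, k, z).1 <+: (u, g * σ.resW k⁻¹ (σ.actW k r),
            w ++ σ.actW k r).2.2 from List.prefix_append w _)]
        simp [actW_inv_cancel']
      rw [e2]
      constructor
      · intro hh
        exfalso
        have hz : z = z ++ r := by
          have := congrArg (fun o => Option.map (fun a : List X × G × List X => a.2.2) o) hh
          simpa using this
        apply hr
        have hl := congrArg List.length hz
        rw [List.length_append] at hl
        exact List.eq_nil_of_length_eq_zero (by omega)
      · rintro ⟨r0, hz, -, -⟩
        exfalso
        apply hr
        have hl := congrArg List.length hz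
        rw [List.length_append, List.length_append] at hl
        exact List.eq_nil_of_length_eq_zero (by omega)
    · have e1 : σ.triMul (u, g, v) (z, k⁻¹, w) = none := by
        rw [triMul, if_neg (show ¬ (u, g, v).2.2 <+: (z, k⁻¹, w).1 from h1),
          if_neg (show ¬ (z, k⁻¹, w).1 <+: (u, g, v).2.2 from h2)]
      rw [e1, ihMul_none_left]
      constructor
      · intro h; exact absurd h (by simp)
      · rintro ⟨r, hz, -⟩
        exact absurd ⟨r, hz.symm⟩ h1

lemma ihLe_refl_some (a : List X × G × List X) : σ.ihLe (some a) (some a) := by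
  obtain ⟨w, k, z⟩ := a
  rw [le_some_iff]
  exact ⟨[], by simp, by simp, by simp⟩


lemma below_both_iff (u : List X) (g : G) (v p : List X) (h : G) (w : List X) (k : G)
    (z : List X) :
    (σ.ihLe (some (w, k, z)) (some (u, g, v)) ∧
      σ.ihLe (some (w, k, z)) (some (u ++ σ.actW g p, h, v ++ p))) ↔
    ∃ r : List X, z = (v ++ p) ++ r ∧ w = (u ++ σ.actW g p) ++ σ.actW h r ∧
      k = σ.resW h r ∧ σ.SFix (h⁻¹ * σ.resW g p) r := by
  rw [le_some_iff, le_some_iff]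
  constructor
  · rintro ⟨⟨r, hz, hw, hk⟩, ⟨r', hz', hw', hk'⟩⟩
    have hrr : r = p ++ r' := by
      apply List.append_cancel_left (as := v)
      rw [← hz, hz', List.append_assoc]
    subst hrr
    have hww : σ.actW (σ.resW g p) r' = σ.actW h r' := by
      have h1 : u ++ σ.actW g (p ++ r') = (u ++ σ.actW g p) ++ σ.actW h r' := by
        rw [← hw, hw']
      rw [actW_append', ← List.append_assoc] at h1
      exact List.append_cancel_left h1
    have hkk : σ.resW (σ.resW g p) r' = σ.resW h r' := by
      rw [← resW_append', ← hk, hk']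
    refine ⟨r', hz', hw', hk', ?_, ?_⟩
    · rw [actW_mul', hww, actW_inv_cancel']
    · rw [resW_mul', hww, hkk, ← resW_mul', inv_mul_cancel, resW_one']
  · rintro ⟨r, hz, hw, hk, hfix⟩
    have hgp : σ.resW g p = h * (h⁻¹ * σ.resW g p) := by group
    have hww : σ.actW (σ.resW g p) r = σ.actW h r := by
      conv_lhs => rw [hgp]
      rw [actW_mul', hfix.1]
    have hkk : σ.resW (σ.resW g p) r = σ.resW h r := by
      conv_lhs => rw [hgp]
      rw [resW_mul', hfix.1, hfix.2, mul_one]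
    refine ⟨⟨p ++ r, ?_, ?_, ?_⟩, ⟨r, hz, hw, hk⟩⟩
    · rw [hz, List.append_assoc]
    · rw [actW_append', hww, ← List.append_assoc]; exact hw
    · rw [resW_append', hkk]; exact hk

lemma exists_F_of_only_none {s t : IH G X}
    (h : ∀ x : IH G X, σ.ihLe x s → σ.ihLe x t → x = none) :
    ∃ F : Finset (IH G X),
      {x : IH G X | σ.ihLe x s ∧ σ.ihLe x t} = {x : IH G X | ∃ f ∈ F, σ.ihLe x f} := by
  refine ⟨{none}, ?_⟩
  ext x
  simp only [Set.mem_setOf_eq, Finset.mem_singleton]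
  constructor
  · rintro ⟨h1, h2⟩
    exact ⟨none, rfl, by rw [h x h1 h2]; exact σ.ihLe_none_left none⟩
  · rintro ⟨f, rfl, hf⟩
    rw [(σ.ihLe_none_right_iff x).mp hf]
    exact ⟨σ.ihLe_none_left s, σ.ihLe_none_left t⟩

lemma key_lemma (u : List X) (g : G) (v p : List X) (h : G)
    (hfin : ∃ F₀ : Finset (List X), {w : List X | σ.SFix (h⁻¹ * σ.resW g p) w}
        = {w : List X | ∃ f ∈ F₀, ∃ r : List X, w = f ++ r}) :
    ∃ F : Finset (IH G X),
      {x : IH G X | σ.ihLe x (some (u, g, v)) ∧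
          σ.ihLe x (some (u ++ σ.actW g p, h, v ++ p))}
        = {x : IH G X | ∃ f ∈ F, σ.ihLe x f} := by
  classical
  obtain ⟨F₀, hF₀⟩ := hfin
  refine ⟨insert none (F₀.image fun f =>
      (some ((u ++ σ.actW g p) ++ σ.actW h f, σ.resW h f, (v ++ p) ++ f) : IH G X)), ?_⟩
  have hmem : ∀ f ∈ F₀, σ.SFix (h⁻¹ * σ.resW g p) f := by
    intro f hf
    have : f ∈ {w : List X | ∃ f ∈ F₀, ∃ r : List X, w = f ++ r} := ⟨f, hf, [], by simp⟩
    rw [← hF₀] at this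
    exact this
  ext x
  cases x with
  | none =>
    simp only [Set.mem_setOf_eq]
    constructor
    · intro _
      exact ⟨none, Finset.mem_insert_self _ _, σ.ihLe_none_left none⟩
    · intro _
      exact ⟨σ.ihLe_none_left _, σ.ihLe_none_left _⟩
  | some a =>
    obtain ⟨w, k, z⟩ := a
    simp only [Set.mem_setOf_eq]
    rw [below_both_iff]
    constructor
    · rintro ⟨r, hz, hw, hk, hfix⟩
      have hr : r ∈ {w : List X | σ.SFix (h⁻¹ * σ.resW g p) w} := hfix
      rw [hF₀] at hr
      obtain ⟨f0, hf0, q, rfl⟩ := hr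
      refine ⟨some ((u ++ σ.actW g p) ++ σ.actW h f0, σ.resW h f0, (v ++ p) ++ f0),
        Finset.mem_insert_of_mem (Finset.mem_image_of_mem _ hf0), ?_⟩
      rw [le_some_iff]
      refine ⟨q, ?_, ?_, ?_⟩
      · rw [List.append_assoc]; exact hz
      · rw [List.append_assoc, ← actW_append']; exact hw
      · rw [← resW_append']; exact hk
    · rintro ⟨f, hf, hle⟩
      rcases Finset.mem_insert.mp hf with rfl | hf
      · exact absurd ((σ.ihLe_none_right_iff _).mp hle) (by simp)
      · obtain ⟨f0, hf0, rfl⟩ := Finset.mem_image.mp hf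
        rw [le_some_iff] at hle
        obtain ⟨q, hz, hw, hk⟩ := hle
        refine ⟨f0 ++ q, ?_, ?_, ?_, ?_⟩
        · rw [hz, List.append_assoc]
        · rw [hw, actW_append', List.append_assoc]
        · rw [hk, resW_append']
        · exact σ.sfix_append (hmem f0 hf0) q

lemma only_none_of_mismatch (u : List X) (g : G) (v : List X) (u' : List X) (h : G)
    (p : List X) (hu : u' ≠ u ++ σ.actW g p) (x : IH G X)
    (h1 : σ.ihLe x (some (u, g, v))) (h2 : σ.ihLe x (some (u', h, v ++ p))) : x = none := by
  cases x with
  | none => rfl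
  | some a =>
    obtain ⟨w, k, z⟩ := a
    rw [le_some_iff] at h1 h2
    obtain ⟨r, hz, hw, hk⟩ := h1
    obtain ⟨r', hz', hw', hk'⟩ := h2
    exfalso
    apply hu
    have hrr : r = p ++ r' := by
      apply List.append_cancel_left (as := v)
      rw [← hz, hz', List.append_assoc]
    subst hrr
    have h3 : (u ++ σ.actW g p) ++ σ.actW (σ.resW g p) r' = u' ++ σ.actW h r' := by
      rw [List.append_assoc, ← actW_append', ← hw, hw']
    exact (List.append_inj' h3 (by simp)).1.symm

lemma only_none_of_incomp (u : List X) (g : G) (v u' : List X) (h : G) (v' : List X)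
    (hv : ¬ v <+: v') (hv' : ¬ v' <+: v) (x : IH G X)
    (h1 : σ.ihLe x (some (u, g, v))) (h2 : σ.ihLe x (some (u', h, v'))) : x = none := by
  cases x with
  | none => rfl
  | some a =>
    obtain ⟨w, k, z⟩ := a
    rw [le_some_iff] at h1 h2
    obtain ⟨r, hz, -, -⟩ := h1
    obtain ⟨r', hz', -, -⟩ := h2
    exfalso
    rcases List.prefix_or_prefix_of_prefix (⟨r, hz.symm⟩ : v <+: z)
      (⟨r', hz'.symm⟩ : v' <+: z) with hc | hc
    exacts [hv hc, hv' hc]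

lemma hausdorff_of_fin
    (hfin : ∀ g : G, ∃ F : Finset (List X),
      {w : List X | σ.SFix g w} = {w : List X | ∃ f ∈ F, ∃ r : List X, w = f ++ r}) :
    σ.IHHausdorff := by
  intro s t
  cases s with
  | none =>
    exact σ.exists_F_of_only_none (fun x h1 _ => (σ.ihLe_none_right_iff x).mp h1)
  | some a =>
    cases t with
    | none =>
      exact σ.exists_F_of_only_none (fun x _ h2 => (σ.ihLe_none_right_iff x).mp h2)
    | some b =>
      obtain ⟨u, g, v⟩ := a
      obtain ⟨u', h, v'⟩ := b
      by_cases hv : v <+: v'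
      · obtain ⟨p, rfl⟩ := hv
        by_cases hu : u' = u ++ σ.actW g p
        · subst hu
          exact σ.key_lemma u g v p h (hfin _)
        · exact σ.exists_F_of_only_none
            (fun x h1 h2 => σ.only_none_of_mismatch u g v u' h p hu x h1 h2)
      · by_cases hv' : v' <+: v
        · obtain ⟨p, rfl⟩ := hv'
          by_cases hu : u = u' ++ σ.actW h p
          · subst hu
            obtain ⟨F, hF⟩ := σ.key_lemma u' h v' p g (hfin _)
            refine ⟨F, ?_⟩
            rw [← hF]
            ext x
            simp only [Set.mem_setOf_eq]
            exact and_comm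
          · exact σ.exists_F_of_only_none
              (fun x h1 h2 => σ.only_none_of_mismatch u' h v' u g p hu x h2 h1)
        · exact σ.exists_F_of_only_none
            (fun x h1 h2 => σ.only_none_of_incomp u g v u' h v' hv hv' x h1 h2)

lemma fin_of_hausdorff (hH : σ.IHHausdorff) (g : G) :
    ∃ F : Finset (List X),
      {w : List X | σ.SFix g w} = {w : List X | ∃ f ∈ F, ∃ r : List X, w = f ++ r} := by
  classical
  obtain ⟨F, hF⟩ := hH (some ([], g, [])) (some ([], 1, []))
  refine ⟨F.biUnion (fun f => f.elim ∅ (fun a => {a.2.2})), ?_⟩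
  have hFs : ∀ a k b, some (a, k, b) ∈ F → σ.SFix g b := by
    intro a k b hf
    have hx : (some (a, k, b) : IH G X) ∈ {x : IH G X | ∃ f ∈ F, σ.ihLe x f} :=
      ⟨_, hf, σ.ihLe_refl_some _⟩
    rw [← hF] at hx
    obtain ⟨h1, h2⟩ := hx
    rw [le_some_iff] at h1 h2
    obtain ⟨r, hz, hw, hk⟩ := h1
    obtain ⟨r', hz', hw', hk'⟩ := h2
    simp only [List.nil_append, actW_one', resW_one'] at hz hw hk hz' hw' hk'
    subst hz
    constructor
    · rw [← hw]; exact hw'.trans hz'.symm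
    · rw [← hk]; exact hk'
  ext w0
  simp only [Set.mem_setOf_eq, Finset.mem_biUnion]
  constructor
  · intro hw0
    have hx : (some (w0, 1, w0) : IH G X) ∈
        {x : IH G X | σ.ihLe x (some ([], g, [])) ∧ σ.ihLe x (some ([], 1, []))} := by
      constructor
      · rw [le_some_iff]
        exact ⟨w0, by simp, by simp [hw0.1], by simp [hw0.2]⟩
      · rw [le_some_iff]
        exact ⟨w0, by simp, by simp, by simp⟩
    rw [hF] at hx
    obtain ⟨f, hf, hle⟩ := hx
    cases f with
    | none => exact absurd ((σ.ihLe_none_right_iff _).mp hle) (by simp)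
    | some a =>
      obtain ⟨a1, k1, b1⟩ := a
      rw [le_some_iff] at hle
      obtain ⟨r, hz, -, -⟩ := hle
      exact ⟨b1, ⟨some (a1, k1, b1), hf, by simp⟩, r, hz⟩
  · rintro ⟨b, ⟨f, hf, hb⟩, r, rfl⟩
    cases f with
    | none => simp at hb
    | some a =>
      obtain ⟨a1, k1, b1⟩ := a
      simp only [Option.elim, Finset.mem_singleton] at hb
      rw [hb]
      exact σ.sfix_append (hFs a1 k1 b1 hf) r


end SelfSimilarAction

open SelfSimilarAction in
/-- For a faithful self-similar action on `X*` with `|X| ≥ 2`, the inverse hull `S` is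
a Hausdorff inverse semigroup iff for each `g ∈ G` there is a finite set `F_g ⊆ X*`
with `F_g X*` exactly the set of words strongly fixed by `g`.  Moreover, an idempotent
`w w*` lies below `u g v*` in the natural partial order iff `u = v`, `w = v z` and `g`
strongly fixes `z`. -/
theorem stmt19 {G X : Type*} [Group G] [DecidableEq X]
    (σ : SelfSimilarAction G X) (hX : ∃ x y : X, x ≠ y) (hfaith : σ.Faithful) :
    (σ.IHHausdorff ↔
      ∀ g : G, ∃ F : Finset (List X),
        {w : List X | σ.SFix g w} = {w : List X | ∃ f ∈ F, ∃ r : List X, w = f ++ r}) ∧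
    (∀ (u : List X) (g : G) (v w : List X),
      σ.ihLe (some (w, 1, w)) (some (u, g, v)) ↔
        u = v ∧ ∃ z : List X, w = v ++ z ∧ σ.SFix g z) := by
  constructor
  · exact ⟨fun hH g => σ.fin_of_hausdorff hH g, fun hfin => σ.hausdorff_of_fin hfin⟩
  · intro u g v w
    rw [σ.le_some_iff]
    constructor
    · rintro ⟨r, hz, hw, hk⟩
      obtain ⟨hu, hact⟩ := List.append_inj' (hw.symm.trans hz) (by simp)
      exact ⟨hu, r, hz, hact, hk.symm⟩
    · rintro ⟨rfl, z0, rfl, h1, h2⟩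
      exact ⟨z0, rfl, by rw [h1], h2.symm⟩
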